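/- Let α > 0, β > 0, b > 0 and γ ∈ (1/2, 1). Then e^{-b(s+β)^{1-γ}} · ∑_{i=0}^{s} e^{b(i+β)^{1-γ}} / (i+β)^{2γ} = O(s^{-γ}) as s → ∞. -/

import Mathlib

open Filter

private lemma rpow_add_one_le' {x p : ℝ} (hx : 0 ≤ x) (hp0 : 0 ≤ p) (hp1 : p ≤ 1) :
    (x + 1) ^ p ≤ x ^ p + 1 := by
  have h := NNReal.rpow_add_le_add_rpow x.toNNReal 1 hp0 hp1
  have h2 : ((x.toNNReal + 1 : NNReal) : ℝ) = x + 1 := by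
    simp [Real.coe_toNNReal x hx]
  calc (x+1)^p = (((x.toNNReal + 1 : NNReal)):ℝ)^p := by rw [h2]
    _ = (((x.toNNReal + 1 : NNReal) ^ p : NNReal) : ℝ) := by
        rw [NNReal.coe_rpow]
    _ ≤ ((x.toNNReal ^ p + 1 ^ p : NNReal) : ℝ) := by exact_mod_cast h
    _ = x ^ p + 1 := by
        push_cast [Real.coe_toNNReal x hx]
        simp

private lemma hasDerivH (β b γ : ℝ) (x : ℝ) (hx : 0 < x + β) :
    HasDerivAt (fun t : ℝ => Real.exp (b * (t + β) ^ (1-γ)))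
      (Real.exp (b * (x + β) ^ (1-γ)) * (b * ((1-γ) * (x + β) ^ (-γ)))) x := by
  have h1 : HasDerivAt (fun t : ℝ => t + β) 1 x := (hasDerivAt_id x).add_const β
  have h2 : HasDerivAt (fun y : ℝ => y ^ (1-γ)) ((1-γ) * (x+β) ^ (1-γ-1)) (x+β) :=
    Real.hasDerivAt_rpow_const (Or.inl hx.ne')
  have h3 := h2.comp x h1
  have h4 := (h3.const_mul b).exp
  have he : (1 - γ - 1 : ℝ) = -γ := by ring
  rw [he] at h4
  convert h4 using 1
  simp only [Function.comp]
  simp only [Function.comp_apply]; ring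

private lemma stepH (β b γ : ℝ) (hβ : 0 < β) (hb : 0 < b) (hγ0 : 0 < γ) (hγ1 : γ < 1)
    (a : ℝ) (ha : 0 ≤ a) :
    b * (1-γ) * (a + 1 + β) ^ (-γ) * Real.exp (b * (a + β) ^ (1-γ))
      ≤ Real.exp (b * (a + 1 + β) ^ (1-γ)) - Real.exp (b * (a + β) ^ (1-γ)) := by
  have hlt : a < a + 1 := by linarith
  have hpos : ∀ x ∈ Set.Icc a (a+1), 0 < x + β := by
    intro x hx; have := hx.1; linarith
  obtain ⟨c, hc, hceq⟩ := exists_hasDerivAt_eq_slope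
      (fun t : ℝ => Real.exp (b * (t + β) ^ (1-γ)))
      (fun x => Real.exp (b * (x + β) ^ (1-γ)) * (b * ((1-γ) * (x + β) ^ (-γ))))
      hlt
      (fun x hx => (hasDerivH β b γ x (hpos x hx)).continuousAt.continuousWithinAt)
      (fun x hx => hasDerivH β b γ x (hpos x (Set.mem_Icc_of_Ioo hx)))
  have hc1 : a < c := hc.1
  have hc2 : c < a + 1 := hc.2
  have hcb : 0 < c + β := by linarith
  rw [add_sub_cancel_left, div_one] at hceq
  rw [← hceq]
  have h1 : (a + 1 + β) ^ (-γ) ≤ (c + β) ^ (-γ) :=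
    Real.rpow_le_rpow_of_nonpos hcb (by linarith) (by linarith)
  have h2 : Real.exp (b * (a + β) ^ (1-γ)) ≤ Real.exp (b * (c + β) ^ (1-γ)) := by
    apply Real.exp_le_exp.2
    apply mul_le_mul_of_nonneg_left _ hb.le
    exact Real.rpow_le_rpow (by linarith) (by linarith) (by linarith)
  have hb1 : 0 < b * (1-γ) := mul_pos hb (by linarith)
  calc b * (1-γ) * (a + 1 + β) ^ (-γ) * Real.exp (b * (a + β) ^ (1-γ))
      ≤ b * (1-γ) * (c + β) ^ (-γ) * Real.exp (b * (c + β) ^ (1-γ)) := by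
        apply mul_le_mul (mul_le_mul_of_nonneg_left h1 hb1.le) h2 (Real.exp_pos _).le
        positivity
    _ = Real.exp (b * (c + β) ^ (1-γ)) * (b * ((1-γ) * (c + β) ^ (-γ))) := by ring

private lemma termH (β b γ : ℝ) (hβ : 0 < β) (hb : 0 < b) (hγ0 : 0 < γ) (hγ1 : γ < 1)
    (a : ℝ) (ha : 0 ≤ a) :
    Real.exp (b * (a + 1 + β) ^ (1-γ)) / (a + 1 + β) ^ (2*γ)
      ≤ (Real.exp b / (b * (1-γ))) * (a + 1 + β) ^ (-γ) *
        (Real.exp (b * (a + 1 + β) ^ (1-γ)) - Real.exp (b * (a + β) ^ (1-γ))) := by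
  have hab : 0 < a + 1 + β := by linarith
  set X : ℝ := (a + 1 + β) ^ γ with hX
  have hXpos : 0 < X := Real.rpow_pos_of_pos hab γ
  have hXneg : (a + 1 + β) ^ (-γ) = X⁻¹ := by rw [Real.rpow_neg hab.le]
  have h2γ : (a + 1 + β) ^ (2*γ) = X * X := by
    rw [hX, ← Real.rpow_add hab]; ring_nf
  set E0 : ℝ := Real.exp (b * (a + β) ^ (1-γ))
  set E1 : ℝ := Real.exp (b * (a + 1 + β) ^ (1-γ))
  have hgrow : E1 ≤ Real.exp b * E0 := by
    rw [← Real.exp_add]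
    apply Real.exp_le_exp.2
    have h := rpow_add_one_le' (x := a + β) (p := 1 - γ) (by linarith) (by linarith) (by linarith)
    have h2 : (a + 1 + β) = (a + β) + 1 := by ring
    rw [h2]
    nlinarith
  have hstep := stepH β b γ hβ hb hγ0 hγ1 a ha
  rw [hXneg] at hstep ⊢
  set D : ℝ := E1 - E0
  have hE0 : 0 < E0 := Real.exp_pos _
  have hb1 : 0 < b * (1-γ) := mul_pos hb (by linarith)
  calc E1 / (a + 1 + β) ^ (2*γ) = E1 / (X * X) := by rw [h2γ]
    _ ≤ (Real.exp b * E0) / (X * X) := by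
        gcongr
    _ = (Real.exp b / (b * (1-γ))) * X⁻¹ * (b * (1-γ) * X⁻¹ * E0) := by
        field_simp [show (1:ℝ) - γ ≠ 0 by linarith]
    _ ≤ (Real.exp b / (b * (1-γ))) * X⁻¹ * D := by
        apply mul_le_mul_of_nonneg_left hstep
        positivity

theorem stmt17 (α β b γ : ℝ) (hα : 0 < α) (hβ : 0 < β) (hb : 0 < b)
    (hγ : γ ∈ Set.Ioo (1/2 : ℝ) 1) :
    ∃ K, ∀ᶠ s : ℕ in atTop,
      Real.exp (-b * ((s:ℝ)+β) ^ (1-γ)) *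
        ∑ i ∈ Finset.range (s+1),
          Real.exp (b * ((i:ℝ)+β) ^ (1-γ)) / ((i:ℝ)+β) ^ (2*γ)
      ≤ K * (s:ℝ) ^ (-γ) := by
  obtain ⟨hγl, hγu⟩ := hγ
  have hγ0 : 0 < γ := by linarith
  have h1γ : 0 < 1 - γ := by linarith
  set C1 : ℝ := Real.exp b / (b * (1-γ)) with hC1def
  have hC1 : 0 < C1 := div_pos (Real.exp_pos b) (mul_pos hb h1γ)
  set c : ℝ := 1 - (3/4 : ℝ) ^ (1-γ) with hcdef
  have hq1 : (3/4 : ℝ) ^ (1-γ) < 1 := Real.rpow_lt_one (by norm_num) (by norm_num) h1γ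
  have hc : 0 < c := by rw [hcdef]; linarith
  refine ⟨C1 * 2 ^ γ + 1, ?_⟩
  have h0 : Tendsto (fun u : ℝ => u ^ ((1+γ)/(1-γ)) * Real.exp (-(b*c) * u)) atTop (nhds 0) :=
    tendsto_rpow_mul_exp_neg_mul_atTop_nhds_zero _ _ (mul_pos hb hc)
  have h1 : Tendsto (fun s : ℕ => ((s:ℝ)) ^ (1-γ)) atTop atTop :=
    (tendsto_rpow_atTop h1γ).comp tendsto_natCast_atTop_atTop
  have hdecay0 : ∀ᶠ s : ℕ in atTop,
      ((s:ℝ) ^ (1-γ)) ^ ((1+γ)/(1-γ)) * Real.exp (-(b*c) * (s:ℝ)^(1-γ)) < β ^ (2*γ) :=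
    (h0.comp h1).eventually_lt_const (by positivity)
  have hβs : ∀ᶠ s : ℕ in atTop, 4 * β ≤ (s:ℝ) :=
    tendsto_natCast_atTop_atTop.eventually_ge_atTop (4*β)
  filter_upwards [hdecay0, hβs, eventually_ge_atTop 1] with s hdec hs4 hs1
  have hspos : (0:ℝ) < (s:ℝ) := by exact_mod_cast Nat.pos_of_ne_zero (by omega)
  set m : ℕ := s / 2 with hm
  have hms : m < s := Nat.div_lt_self (by omega) (by norm_num)
  have hm2 : (m:ℝ) ≤ (s:ℝ)/2 := by
    have h2m : 2 * m ≤ s := by omega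
    have := (Nat.cast_le (α := ℝ)).2 h2m
    push_cast at this
    linarith
  have hm3 : (s:ℝ)/2 ≤ (m:ℝ) + 1 := by
    have h2m : s ≤ 2*m + 2 := by omega
    have := (Nat.cast_le (α := ℝ)).2 h2m
    push_cast at this
    linarith
  set H : ℕ → ℝ := fun n => Real.exp (b * ((n:ℝ) + β) ^ (1-γ)) with hH
  have hHmono : ∀ {i j : ℕ}, i ≤ j → H i ≤ H j := by
    intro i j hij
    apply Real.exp_le_exp.2
    apply mul_le_mul_of_nonneg_left _ hb.le
    apply Real.rpow_le_rpow (by positivity) _ h1γ.le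
    have : (i:ℝ) ≤ (j:ℝ) := by exact_mod_cast hij
    linarith
  set f : ℕ → ℝ := fun i => Real.exp (b * ((i:ℝ) + β) ^ (1-γ)) / ((i:ℝ) + β) ^ (2*γ) with hf
  have hHs : 0 < H s := Real.exp_pos _
  have hHm : 0 < H m := Real.exp_pos _
  -- low part
  have hsum_low : ∑ i ∈ Finset.range (m+1), f i ≤ ((m:ℝ)+1) * (H m / β^(2*γ)) := by
    have hbd : ∀ i ∈ Finset.range (m+1), f i ≤ H m / β^(2*γ) := by
      intro i hi
      have hi'' : i ≤ m := Nat.lt_succ_iff.mp (Finset.mem_range.mp hi)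
      apply div_le_div₀ hHm.le (hHmono hi'') (Real.rpow_pos_of_pos hβ _)
      apply Real.rpow_le_rpow hβ.le (by linarith [Nat.cast_nonneg (α := ℝ) i]) (by positivity)
    calc ∑ i ∈ Finset.range (m+1), f i
        ≤ (Finset.range (m+1)).card • (H m / β^(2*γ)) :=
          Finset.sum_le_card_nsmul _ _ _ hbd
      _ = ((m:ℝ)+1) * (H m / β^(2*γ)) := by
          rw [Finset.card_range, nsmul_eq_mul]
          push_cast
          ring
  -- high part
  have hsum_high : ∑ i ∈ Finset.Ico (m+1) (s+1), f i
      ≤ C1 * (2^γ * (s:ℝ)^(-γ)) * (H s - H m) := by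
    have key : ∀ j ∈ Finset.range (s-m),
        f (m+1+j) ≤ C1 * (2^γ * (s:ℝ)^(-γ)) * (H (m+(j+1)) - H (m+j)) := by
      intro j _
      have ha : (0:ℝ) ≤ ((m+j:ℕ):ℝ) := Nat.cast_nonneg _
      have h := termH β b γ hβ hb hγ0 hγu ((m+j:ℕ):ℝ) ha
      have hcast : ((m+1+j:ℕ):ℝ) + β = ((m+j:ℕ):ℝ) + 1 + β := by push_cast; ring
      have hcast2 : ((m+(j+1):ℕ):ℝ) + β = ((m+j:ℕ):ℝ) + 1 + β := by push_cast; ring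
      have hD : 0 ≤ H (m+(j+1)) - H (m+j) := sub_nonneg.2 (hHmono (by omega))
      have hbase : (s:ℝ)/2 ≤ ((m+j:ℕ):ℝ) + 1 + β := by
        have : (m:ℝ) ≤ ((m+j:ℕ):ℝ) := by push_cast; linarith [Nat.cast_nonneg (α := ℝ) j]
        linarith
      have hw : (((m+j:ℕ):ℝ) + 1 + β)^(-γ) ≤ 2^γ * (s:ℝ)^(-γ) := by
        have h2 : (((m+j:ℕ):ℝ) + 1 + β)^(-γ) ≤ ((s:ℝ)/2)^(-γ) :=
          Real.rpow_le_rpow_of_nonpos (by linarith) hbase (by linarith)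
        have h3 : ((s:ℝ)/2)^(-γ) = 2^γ * (s:ℝ)^(-γ) := by
          rw [Real.div_rpow hspos.le (by norm_num), Real.rpow_neg (by norm_num : (0:ℝ) ≤ 2), div_eq_mul_inv, inv_inv]
          ring
        linarith [h2, h3.le]
      calc f (m+1+j) = Real.exp (b * (((m+j:ℕ):ℝ) + 1 + β) ^ (1-γ)) /
              (((m+j:ℕ):ℝ) + 1 + β) ^ (2*γ) := by rw [hf]; simp only []; rw [hcast]
        _ ≤ C1 * ((((m+j:ℕ):ℝ) + 1 + β))^(-γ) *
              (Real.exp (b * (((m+j:ℕ):ℝ) + 1 + β) ^ (1-γ)) -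
               Real.exp (b * (((m+j:ℕ):ℝ) + β) ^ (1-γ))) := h
        _ = C1 * ((((m+j:ℕ):ℝ) + 1 + β))^(-γ) * (H (m+(j+1)) - H (m+j)) := by
              rw [hH]; simp only []; rw [hcast2]
        _ ≤ C1 * (2^γ * (s:ℝ)^(-γ)) * (H (m+(j+1)) - H (m+j)) := by
              apply mul_le_mul_of_nonneg_right _ hD
              exact mul_le_mul_of_nonneg_left hw hC1.le
    rw [Finset.sum_Ico_eq_sum_range]
    have hn : s + 1 - (m+1) = s - m := by omega
    rw [hn]
    calc ∑ j ∈ Finset.range (s-m), f (m+1+j)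
        ≤ ∑ j ∈ Finset.range (s-m), C1 * (2^γ * (s:ℝ)^(-γ)) * (H (m+(j+1)) - H (m+j)) :=
          Finset.sum_le_sum key
      _ = C1 * (2^γ * (s:ℝ)^(-γ)) * ∑ j ∈ Finset.range (s-m), (H (m+(j+1)) - H (m+j)) := by
          rw [← Finset.mul_sum]
      _ = C1 * (2^γ * (s:ℝ)^(-γ)) * (H (m+(s-m)) - H (m+0)) := by
          congr 1
          exact Finset.sum_range_sub (fun k => H (m+k)) (s-m)
      _ = C1 * (2^γ * (s:ℝ)^(-γ)) * (H s - H m) := by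
          rw [show m + (s-m) = s from by omega, Nat.add_zero]
  -- split
  have hsplit : ∑ i ∈ Finset.range (s+1), f i
      = ∑ i ∈ Finset.range (m+1), f i + ∑ i ∈ Finset.Ico (m+1) (s+1), f i := by
    rw [Finset.range_eq_Ico, Finset.range_eq_Ico]
    exact (Finset.sum_Ico_consecutive f (n := m+1) (k := s+1) (Nat.zero_le _) (by omega)).symm
  -- exponential prefactor
  have hexp : Real.exp (-b * ((s:ℝ)+β)^(1-γ)) = (H s)⁻¹ := by
    rw [hH]
    simp only []
    rw [← Real.exp_neg]
    congr 1
    ring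
  -- ratio bound
  have hratio : H m * (H s)⁻¹ ≤ Real.exp (-(b*c) * (s:ℝ)^(1-γ)) := by
    have heq : H m * (H s)⁻¹
        = Real.exp (b*((m:ℝ)+β)^(1-γ) - b*((s:ℝ)+β)^(1-γ)) := by
      rw [Real.exp_sub, div_eq_mul_inv]
    rw [heq]
    apply Real.exp_le_exp.2
    have hs' : (s:ℝ)^(1-γ) ≤ ((s:ℝ)+β)^(1-γ) :=
      Real.rpow_le_rpow hspos.le (by linarith) h1γ.le
    have hm' : ((m:ℝ)+β)^(1-γ) ≤ (3/4:ℝ)^(1-γ) * (s:ℝ)^(1-γ) := by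
      rw [← Real.mul_rpow (by norm_num) hspos.le]
      apply Real.rpow_le_rpow (by positivity) (by linarith) h1γ.le
    have f1 := mul_le_mul_of_nonneg_left hm' hb.le
    have f2 := mul_le_mul_of_nonneg_left hs' hb.le
    rw [hcdef]
    nlinarith [f1, f2]
  have hsE : (s:ℝ) * Real.exp (-(b*c)*(s:ℝ)^(1-γ)) ≤ β^(2*γ) * (s:ℝ)^(-γ) := by
    have h := hdec.le
    have hpow : ((s:ℝ)^(1-γ))^((1+γ)/(1-γ)) = (s:ℝ)^(1+γ) := by
      rw [← Real.rpow_mul hspos.le]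
      congr 1
      field_simp
    rw [hpow] at h
    have h2 := mul_le_mul_of_nonneg_right h (Real.rpow_nonneg hspos.le (-γ))
    have h3 : (s:ℝ)^(1+γ) * (s:ℝ)^(-γ) = (s:ℝ) := by
      rw [← Real.rpow_add hspos]
      norm_num
    calc (s:ℝ) * Real.exp (-(b*c)*(s:ℝ)^(1-γ))
        = (s:ℝ)^(1+γ) * Real.exp (-(b*c)*(s:ℝ)^(1-γ)) * (s:ℝ)^(-γ) := by
          rw [mul_comm ((s:ℝ)^(1+γ)) _, mul_assoc, h3]; ring
      _ ≤ β^(2*γ) * (s:ℝ)^(-γ) := h2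
  have hm1s : (m:ℝ)+1 ≤ (s:ℝ) := by
    have : m + 1 ≤ s := by omega
    exact_mod_cast this
  have part1 : ((m:ℝ)+1) * (H m * (H s)⁻¹) / β^(2*γ) ≤ (s:ℝ)^(-γ) := by
    calc ((m:ℝ)+1) * (H m * (H s)⁻¹) / β^(2*γ)
        ≤ ((s:ℝ) * Real.exp (-(b*c)*(s:ℝ)^(1-γ))) / β^(2*γ) :=
          div_le_div₀ (by positivity)
            (mul_le_mul hm1s hratio (mul_nonneg hHm.le (inv_nonneg.2 hHs.le)) hspos.le)
            (by positivity) le_rfl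
      _ ≤ (β^(2*γ) * (s:ℝ)^(-γ)) / β^(2*γ) := by gcongr
      _ = (s:ℝ)^(-γ) := by
          rw [mul_comm, mul_div_assoc, div_self (by positivity), mul_one]
  have part2 : C1 * (2^γ * (s:ℝ)^(-γ)) * ((H s - H m) * (H s)⁻¹)
      ≤ C1 * (2^γ * (s:ℝ)^(-γ)) * 1 := by
    apply mul_le_mul_of_nonneg_left _ (by positivity)
    rw [← div_eq_mul_inv]
    exact div_le_one_of_le₀ (by linarith) hHs.le
  calc Real.exp (-b * ((s:ℝ)+β)^(1-γ)) * ∑ i ∈ Finset.range (s+1), f i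
      = (H s)⁻¹ * (∑ i ∈ Finset.range (m+1), f i + ∑ i ∈ Finset.Ico (m+1) (s+1), f i) := by
        rw [hexp, hsplit]
    _ ≤ (H s)⁻¹ * (((m:ℝ)+1) * (H m / β^(2*γ)) + C1 * (2^γ * (s:ℝ)^(-γ)) * (H s - H m)) := by
        apply mul_le_mul_of_nonneg_left (add_le_add hsum_low hsum_high) (inv_nonneg.2 hHs.le)
    _ = ((m:ℝ)+1) * (H m * (H s)⁻¹) / β^(2*γ)
        + C1 * (2^γ * (s:ℝ)^(-γ)) * ((H s - H m) * (H s)⁻¹) := by ring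
    _ ≤ (s:ℝ)^(-γ) + C1 * (2^γ * (s:ℝ)^(-γ)) * 1 := add_le_add part1 part2
    _ = (C1 * 2^γ + 1) * (s:ℝ)^(-γ) := by ring
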